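/- Let G be a group, E a G-set, and H ≤ G a subgroup. For each n let S_n(G,E) denote the action groupoid G ⫽ E^{n+1} (objects E^{n+1}, morphisms (e•) → (e'•) are g ∈ G with g·e• = e'•). Then for every n ≥ 2 and every 0 ≤ i ≤ n the functor S_n(H,E) → S_{{0,...,i}}(H,E) ×^{(2)}_{S_{{i}}(H,E)} S_{{i,...,n}}(G,E), induced by the inclusion H ↪ G and the face maps projecting onto the indicated coordinate intervals, is an equivalence of groupoids (where ×^{(2)} denotes the 2-pullback/iso-comma of groupoids); similarly with the roles of H and G in the two factors exchanged. In particular the Hecke–Waldhausen morphism S•(H,E) → S•(G,E) is both left and right relative 1-Segal at the level of groupoids. -/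

import Mathlib

open CategoryTheory

namespace HeckeWaldhausen

universe u v

/-- The action groupoid `G ⫽ X`: objects are elements of `X`, morphisms `x ⟶ y` are
group elements `g` with `g • x = y`. -/
def AGpd (G : Type u) [Group G] (X : Type v) [MulAction G X] := X

variable {G : Type u} [Group G] {X : Type v} [MulAction G X]

instance : MulAction G (AGpd G X) := inferInstanceAs (MulAction G X)

instance : Category (AGpd G X) where
  Hom a b := {g : G // g • a = b}
  id a := ⟨1, one_smul _ _⟩
  comp f g := ⟨g.1 * f.1, by rw [mul_smul, f.2, g.2]⟩
  id_comp f := Subtype.ext (mul_one _)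
  comp_id f := Subtype.ext (one_mul _)
  assoc f g h := Subtype.ext (mul_assoc _ _ _).symm

/-- The functor between action groupoids induced by a group homomorphism `φ` and an
equivariant map `u`. -/
def actFunctor {H : Type*} [Group H] {A : Type*} [MulAction H A]
    (φ : H →* G) (u : A → X) (hu : ∀ (h : H) (a : A), u (h • a) = φ h • u a) :
    AGpd H A ⥤ AGpd G X where
  obj := u
  map {a b} f := ⟨φ f.1, (hu f.1 a).symm.trans (congrArg u f.2)⟩
  map_id a := Subtype.ext (map_one φ)
  map_comp f g := Subtype.ext (map_mul φ _ _)

/-- The 2-pullback (iso-comma category) of two functors. -/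
structure TwoPullback {A : Type*} {B : Type*} {C : Type*}
    [Category A] [Category B] [Category C] (F : A ⥤ C) (G : B ⥤ C) where
  left : A
  right : B
  iso : F.obj left ≅ G.obj right

instance {A B C : Type*} [Category A] [Category B] [Category C]
    (F : A ⥤ C) (G : B ⥤ C) : Category (TwoPullback F G) where
  Hom p q := {fg : (p.left ⟶ q.left) × (p.right ⟶ q.right) //
    F.map fg.1 ≫ q.iso.hom = p.iso.hom ≫ G.map fg.2}
  id p := ⟨(𝟙 _, 𝟙 _), by simp⟩
  comp f g := ⟨(f.1.1 ≫ g.1.1, f.1.2 ≫ g.1.2), by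
    rw [Functor.map_comp, Functor.map_comp, Category.assoc, g.2, ← Category.assoc, f.2,
      Category.assoc]⟩
  id_comp f := Subtype.ext (Prod.ext (Category.id_comp _) (Category.id_comp _))
  comp_id f := Subtype.ext (Prod.ext (Category.comp_id _) (Category.comp_id _))
  assoc f g h := Subtype.ext (Prod.ext (Category.assoc _ _ _) (Category.assoc _ _ _))

section

variable (G) (E : Type u) [MulAction G E] (H : Subgroup G) (n i : ℕ) (hi : i ≤ n)

/-- `S_{{0,…,i}} → S_{{i}}`: evaluation at the last vertex, over the inclusion `φ`. -/
def evLast {K : Type*} [Group K] [MulAction K E] (φ : K →* G)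
    (hφ : ∀ (k : K) (x : E), k • x = φ k • x) :
    AGpd K (Fin (i + 1) → E) ⥤ AGpd G E :=
  actFunctor φ (fun e => e ⟨i, Nat.lt_succ_self i⟩) (fun k e => hφ k (e ⟨i, Nat.lt_succ_self i⟩))

/-- `S_{{i,…,n}} → S_{{i}}`: evaluation at the first vertex, over the inclusion `φ`. -/
def evFirst {K : Type*} [Group K] [MulAction K E] (φ : K →* G)
    (hφ : ∀ (k : K) (x : E), k • x = φ k • x) :
    AGpd K (Fin (n - i + 1) → E) ⥤ AGpd G E :=
  actFunctor φ (fun e => e ⟨0, Nat.succ_pos _⟩) (fun k e => hφ k (e ⟨0, Nat.succ_pos _⟩))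

/-- The comparison functor
`S_n(H,E) ⟶ S_{{0,…,i}}(H,E) ×⁽²⁾_{S_{{i}}} S_{{i,…,n}}(G,E)`. -/
def cmp₁ : AGpd (↥H) (Fin (n + 1) → E) ⥤
    TwoPullback (evLast G E i H.subtype (fun _ _ => rfl)) (evFirst G E n i (MonoidHom.id G) (fun _ _ => rfl)) where
  obj e :=
    { left := fun j : Fin (i + 1) => e ⟨j.1, by omega⟩
      right := fun j : Fin (n - i + 1) => e ⟨i + j.1, by omega⟩
      iso := Iso.refl _ }
  map {e e'} f :=
    ⟨(⟨f.1, funext fun j => congrFun f.2 _⟩, ⟨H.subtype f.1, funext fun j => congrFun f.2 _⟩),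
      Subtype.ext ((one_mul _).trans (mul_one _).symm)⟩
  map_id e := Subtype.ext (Prod.ext (Subtype.ext rfl) (Subtype.ext (map_one H.subtype)))
  map_comp f g := Subtype.ext (Prod.ext (Subtype.ext rfl) (Subtype.ext (map_mul H.subtype _ _)))

/-- The comparison functor with the roles of `H` and `G` in the two factors exchanged:
`S_n(H,E) ⟶ S_{{0,…,i}}(G,E) ×⁽²⁾_{S_{{i}}} S_{{i,…,n}}(H,E)`. -/
def cmp₂ : AGpd (↥H) (Fin (n + 1) → E) ⥤
    TwoPullback (evLast G E i (MonoidHom.id G) (fun _ _ => rfl)) (evFirst G E n i H.subtype (fun _ _ => rfl)) where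
  obj e :=
    { left := fun j : Fin (i + 1) => e ⟨j.1, by omega⟩
      right := fun j : Fin (n - i + 1) => e ⟨i + j.1, by omega⟩
      iso := Iso.refl _ }
  map {e e'} f :=
    ⟨(⟨H.subtype f.1, funext fun j => congrFun f.2 _⟩, ⟨f.1, funext fun j => congrFun f.2 _⟩),
      Subtype.ext ((one_mul _).trans (mul_one _).symm)⟩
  map_id e := Subtype.ext (Prod.ext (Subtype.ext (map_one H.subtype)) (Subtype.ext rfl))
  map_comp f g := Subtype.ext (Prod.ext (Subtype.ext (map_mul H.subtype _ _)) (Subtype.ext rfl))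

end


section Aux

variable (G : Type u) [Group G] (E : Type u) [MulAction G E] (H : Subgroup G)
variable (n i : ℕ) (hin : i ≤ n)

lemma cmp₁_isEquivalence : (cmp₁ G E H n i hin).IsEquivalence := by
  refine ⟨⟨fun {e e'} f g hfg => ?_⟩, ⟨fun {e e'} m => ?_⟩, ⟨fun X => ?_⟩⟩
  · exact Subtype.ext (congrArg (fun m => m.1.1.1) hfg)
  · have hk : m.1.2.1 * 1 = 1 * (H.subtype m.1.1.1 : G) := (congrArg Subtype.val m.2).symm
    rw [mul_one, one_mul] at hk
    refine ⟨⟨m.1.1.1, funext fun j => ?_⟩, ?_⟩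
    · rcases le_or_gt j.1 i with hj | hj
      · exact congrFun m.1.1.2 ⟨j.1, by omega⟩
      · obtain ⟨jv, hjv⟩ := j
        have hj' : i < jv := hj
        have h2 := congrFun m.1.2.2 ⟨jv - i, by omega⟩
        rw [hk] at h2
        have h4 : ((m.1.1.1 : G)) • e ⟨i + (jv - i), by omega⟩ = e' ⟨i + (jv - i), by omega⟩ := h2
        have hfin : (⟨i + (jv - i), by omega⟩ : Fin (n+1)) = (⟨jv, hjv⟩ : Fin (n+1)) :=
          Fin.ext (show i + (jv - i) = jv by omega)
        rw [hfin] at h4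
        exact h4
    · exact Subtype.ext (Prod.ext (Subtype.ext rfl) (Subtype.ext hk.symm))
  · obtain ⟨a, b, γ⟩ := X
    have hγ : γ.hom.1 • a ⟨i, Nat.lt_succ_self i⟩ = b ⟨0, Nat.succ_pos _⟩ := γ.hom.2
    refine ⟨fun j : Fin (n+1) =>
      if hj : j.1 ≤ i then a ⟨j.1, by omega⟩ else γ.hom.1⁻¹ • b ⟨j.1 - i, by omega⟩, ⟨?_⟩⟩
    refine ⟨⟨(⟨1, ?_⟩, ⟨γ.hom.1, ?_⟩), ?_⟩, ⟨(⟨1, ?_⟩, ⟨γ.hom.1⁻¹, ?_⟩), ?_⟩, ?_, ?_⟩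
    · funext j
      rw [one_smul]
      exact dif_pos (show (j : ℕ) ≤ i by omega)
    · funext j
      show γ.hom.1 • (if hj : i + (j : ℕ) ≤ i then a ⟨i + (j : ℕ), by omega⟩
          else γ.hom.1⁻¹ • b ⟨i + (j : ℕ) - i, by omega⟩) = b j
      rcases Nat.eq_zero_or_pos j.1 with h0 | h0
      · rw [dif_pos (show i + (j : ℕ) ≤ i by omega)]
        have h1 : (⟨i + (j : ℕ), by omega⟩ : Fin (i+1)) = ⟨i, Nat.lt_succ_self i⟩ :=
          Fin.ext (show i + (j : ℕ) = i by omega)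
        have h2 : j = ⟨0, Nat.succ_pos _⟩ := Fin.ext h0
        rw [h1, h2]
        exact hγ
      · rw [dif_neg (show ¬ i + (j : ℕ) ≤ i by omega), smul_inv_smul]
        exact congrArg b (Fin.ext (show i + (j : ℕ) - i = (j : ℕ) by omega))
    · exact Subtype.ext (show γ.hom.1 * (H.subtype 1 : G) = γ.hom.1 * 1 by simp)
    · funext j
      rw [one_smul]
      symm
      exact dif_pos (show (j : ℕ) ≤ i by omega)
    · funext j
      show γ.hom.1⁻¹ • b j = (if hj : i + (j : ℕ) ≤ i then a ⟨i + (j : ℕ), by omega⟩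
          else γ.hom.1⁻¹ • b ⟨i + (j : ℕ) - i, by omega⟩)
      rcases Nat.eq_zero_or_pos j.1 with h0 | h0
      · rw [dif_pos (show i + (j : ℕ) ≤ i by omega), inv_smul_eq_iff]
        have h1 : (⟨i + (j : ℕ), by omega⟩ : Fin (i+1)) = ⟨i, Nat.lt_succ_self i⟩ :=
          Fin.ext (show i + (j : ℕ) = i by omega)
        have h2 : j = ⟨0, Nat.succ_pos _⟩ := Fin.ext h0
        rw [h1, h2]
        exact hγ.symm
      · rw [dif_neg (show ¬ i + (j : ℕ) ≤ i by omega)]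
        exact congrArg _ (congrArg b (Fin.ext (show (j : ℕ) = i + (j : ℕ) - i by omega)))
    · exact Subtype.ext (show (1 : G) * (H.subtype 1 : G) = γ.hom.1⁻¹ * γ.hom.1 by simp)
    · exact Subtype.ext (Prod.ext (Subtype.ext (mul_one 1)) (Subtype.ext (inv_mul_cancel _)))
    · exact Subtype.ext (Prod.ext (Subtype.ext (mul_one 1)) (Subtype.ext (mul_inv_cancel _)))

lemma cmp₂_isEquivalence : (cmp₂ G E H n i hin).IsEquivalence := by
  refine ⟨⟨fun {e e'} f g hfg => ?_⟩, ⟨fun {e e'} m => ?_⟩, ⟨fun X => ?_⟩⟩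
  · exact Subtype.ext (congrArg (fun m => m.1.2.1) hfg)
  · have hk : 1 * m.1.1.1 = (H.subtype m.1.2.1 : G) * 1 := congrArg Subtype.val m.2
    rw [mul_one, one_mul] at hk
    refine ⟨⟨m.1.2.1, funext fun j => ?_⟩, ?_⟩
    · rcases le_or_gt j.1 i with hj | hj
      · have h2 := congrFun m.1.1.2 ⟨j.1, by omega⟩
        rw [hk] at h2
        exact h2
      · obtain ⟨jv, hjv⟩ := j
        have hj' : i < jv := hj
        have h4 : (m.1.2.1 : ↥H) • e ⟨i + (jv - i), by omega⟩ = e' ⟨i + (jv - i), by omega⟩ :=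
          congrFun m.1.2.2 ⟨jv - i, by omega⟩
        have hfin : (⟨i + (jv - i), by omega⟩ : Fin (n+1)) = (⟨jv, hjv⟩ : Fin (n+1)) :=
          Fin.ext (show i + (jv - i) = jv by omega)
        rw [hfin] at h4
        exact h4
    · exact Subtype.ext (Prod.ext (Subtype.ext hk.symm) (Subtype.ext rfl))
  · obtain ⟨a, b, γ⟩ := X
    have hγ : γ.hom.1 • a ⟨i, Nat.lt_succ_self i⟩ = b ⟨0, Nat.succ_pos _⟩ := γ.hom.2
    refine ⟨fun j : Fin (n+1) =>
      if hj : j.1 ≤ i then γ.hom.1 • a ⟨j.1, by omega⟩ else b ⟨j.1 - i, by omega⟩, ⟨?_⟩⟩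
    refine ⟨⟨(⟨γ.hom.1⁻¹, ?_⟩, ⟨1, ?_⟩), ?_⟩, ⟨(⟨γ.hom.1, ?_⟩, ⟨1, ?_⟩), ?_⟩, ?_, ?_⟩
    · funext j
      show γ.hom.1⁻¹ • (if hj : (j : ℕ) ≤ i then γ.hom.1 • a ⟨(j : ℕ), by omega⟩
          else b ⟨(j : ℕ) - i, by omega⟩) = a j
      rw [dif_pos (show (j : ℕ) ≤ i by omega), inv_smul_smul]
    · funext j
      show (1 : ↥H) • (if hj : i + (j : ℕ) ≤ i then γ.hom.1 • a ⟨i + (j : ℕ), by omega⟩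
          else b ⟨i + (j : ℕ) - i, by omega⟩) = b j
      rw [one_smul]
      rcases Nat.eq_zero_or_pos j.1 with h0 | h0
      · rw [dif_pos (show i + (j : ℕ) ≤ i by omega)]
        have h1 : (⟨i + (j : ℕ), by omega⟩ : Fin (i+1)) = ⟨i, Nat.lt_succ_self i⟩ :=
          Fin.ext (show i + (j : ℕ) = i by omega)
        have h2 : j = ⟨0, Nat.succ_pos _⟩ := Fin.ext h0
        rw [h1, h2]
        exact hγ
      · rw [dif_neg (show ¬ i + (j : ℕ) ≤ i by omega)]
        exact congrArg b (Fin.ext (show i + (j : ℕ) - i = (j : ℕ) by omega))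
    · exact Subtype.ext (show γ.hom.1 * γ.hom.1⁻¹ = (H.subtype 1 : G) * 1 by simp)
    · funext j
      show γ.hom.1 • a j = (if hj : (j : ℕ) ≤ i then γ.hom.1 • a ⟨(j : ℕ), by omega⟩
          else b ⟨(j : ℕ) - i, by omega⟩)
      rw [dif_pos (show (j : ℕ) ≤ i by omega)]
    · funext j
      show (1 : ↥H) • b j = (if hj : i + (j : ℕ) ≤ i then γ.hom.1 • a ⟨i + (j : ℕ), by omega⟩
          else b ⟨i + (j : ℕ) - i, by omega⟩)
      rw [one_smul]
      rcases Nat.eq_zero_or_pos j.1 with h0 | h0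
      · rw [dif_pos (show i + (j : ℕ) ≤ i by omega)]
        have h1 : (⟨i + (j : ℕ), by omega⟩ : Fin (i+1)) = ⟨i, Nat.lt_succ_self i⟩ :=
          Fin.ext (show i + (j : ℕ) = i by omega)
        have h2 : j = ⟨0, Nat.succ_pos _⟩ := Fin.ext h0
        rw [h1, h2]
        exact hγ.symm
      · rw [dif_neg (show ¬ i + (j : ℕ) ≤ i by omega)]
        exact congrArg b (Fin.ext (show (j : ℕ) = i + (j : ℕ) - i by omega))
    · exact Subtype.ext (show (1 : G) * γ.hom.1 = (H.subtype 1 : G) * γ.hom.1 by simp)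
    · exact Subtype.ext (Prod.ext (Subtype.ext (mul_inv_cancel _)) (Subtype.ext (mul_one 1)))
    · exact Subtype.ext (Prod.ext (Subtype.ext (inv_mul_cancel _)) (Subtype.ext (mul_one 1)))

end Aux

/-- for a group `G` acting on `E` and a subgroup `H ≤ G`, the comparison
functors `S_n(H,E) → S_{{0,…,i}} ×⁽²⁾_{S_{{i}}} S_{{i,…,n}}` (one factor over `H`, the
other over `G`, in either order) are equivalences of groupoids; i.e. the
Hecke–Waldhausen morphism `S_•(H,E) → S_•(G,E)` is left and right relative 1-Segal. -/
theorem statement17 (G : Type u) [Group G] (E : Type u) [MulAction G E]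
    (H : Subgroup G) :
    ∀ (n i : ℕ) (_ : 2 ≤ n) (hin : i ≤ n),
      (cmp₁ G E H n i hin).IsEquivalence ∧ (cmp₂ G E H n i hin).IsEquivalence :=
  fun n i _ hin => ⟨cmp₁_isEquivalence G E H n i hin, cmp₂_isEquivalence G E H n i hin⟩

end HeckeWaldhausen
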